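/- Let D₀ be a product of distinct primes and let S be the set of primes dividing D₀, and let D be an integer with -D a quadratic nonresidue appropriately arranged. Then (Dirichlet-type existence): there exists a prime p not dividing 2D such that for every prime ℓ, the Hilbert symbol (-D, p)_ℓ = -1 if and only if ℓ ∈ S. (Existence of the auxiliary prime in Hashimoto's model, as a consequence of Dirichlet's theorem on primes in arithmetic progressions.) -/

import Mathlib

/-- The Hilbert symbol `(a, b)_ℓ` equals `+1` iff the conic `z² = a·x² + b·y²` has a
nontrivial `ℚ_ℓ`-rational point; `(a,b)_ℓ = -1` is the negation of this. -/
def HilbertSymbolOne (ℓ : ℕ) [Fact ℓ.Prime] (a b : ℚ) : Prop :=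
  ∃ x y z : ℚ_[ℓ], (x, y, z) ≠ (0, 0, 0) ∧ z ^ 2 = (a : ℚ_[ℓ]) * x ^ 2 + (b : ℚ_[ℓ]) * y ^ 2


open Polynomial IsLocalRing

variable {p : ℕ} [hpf : Fact p.Prime]

/-- Hensel's lemma specialised to square roots in `ℤ_[p]`. -/
lemma hensel_sq (c t₀ : ℤ_[p]) (h : ‖t₀ ^ 2 - c‖ < ‖2 * t₀‖ ^ 2) :
    ∃ t : ℤ_[p], t ^ 2 = c := by
  have heval : (X ^ 2 - C c).aeval t₀ = t₀ ^ 2 - c := by simp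
  have hderiv : (X ^ 2 - C c).derivative.aeval t₀ = 2 * t₀ := by
    simp [derivative_sub, derivative_X_pow]; norm_num
  obtain ⟨z, hz, -⟩ := hensels_lemma (F := X ^ 2 - C c) (a := t₀) (by rw [heval, hderiv]; exact h)
  refine ⟨z, ?_⟩
  simpa [sub_eq_zero] using hz

lemma norm_two_eq_one (hp : p ≠ 2) : ‖(2 : ℤ_[p])‖ = 1 := by
  have h2 : ¬ ((p : ℤ) ∣ (2 : ℤ)) := by
    intro h
    rw [(by norm_num : (2:ℤ) = ((2:ℕ):ℤ)), Int.natCast_dvd_natCast] at h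
    exact hp ((Nat.prime_dvd_prime_iff_eq hpf.out Nat.prime_two).mp h)
  have hle : ‖(2 : ℤ_[p])‖ ≤ 1 := PadicInt.norm_le_one _
  have : ¬ ‖((2 : ℤ) : ℤ_[p])‖ < 1 := by
    rw [PadicInt.norm_int_lt_one_iff_dvd]
    exact h2
  push_cast at this
  exact le_antisymm hle (not_lt.mp this)

lemma toZMod_zero_norm_lt (x : ℤ_[p]) (h : PadicInt.toZMod x = 0) : ‖x‖ < 1 := by
  have : x ∈ maximalIdeal ℤ_[p] := by
    rw [← PadicInt.ker_toZMod]; exact h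
  rwa [PadicInt.maximalIdeal_eq_span_p, Ideal.mem_span_singleton,
    ← PadicInt.norm_lt_one_iff_dvd] at this

lemma norm_eq_one_of_toZMod_ne (x : ℤ_[p]) (h : PadicInt.toZMod x ≠ 0) : ‖x‖ = 1 := by
  refine le_antisymm (PadicInt.norm_le_one _) (not_lt.mp fun hlt => h ?_)
  have : x ∈ maximalIdeal ℤ_[p] := by
    rw [PadicInt.maximalIdeal_eq_span_p, Ideal.mem_span_singleton,
      ← PadicInt.norm_lt_one_iff_dvd]; exact hlt
  rw [← PadicInt.ker_toZMod] at this
  exact this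

/-- If `c` is a nonzero square mod `p` (`p` odd), then `c` is a square in `ℤ_[p]`. -/
lemma PadicInt.exists_sq_eq (hp : p ≠ 2) (c : ℤ_[p]) (hsq : IsSquare (PadicInt.toZMod c))
    (hc0 : PadicInt.toZMod c ≠ 0) : ∃ t : ℤ_[p], t ^ 2 = c := by
  obtain ⟨s, hs⟩ := hsq
  have hs0 : s ≠ 0 := by rintro rfl; simp at hs; exact hc0 hs
  set t₀ : ℤ_[p] := ((s.val : ℕ) : ℤ_[p]) with ht₀
  have htoZ : PadicInt.toZMod t₀ = s := by
    rw [ht₀, map_natCast]; simp [ZMod.natCast_val, ZMod.cast_id]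
  have hnorm1 : ‖t₀‖ = 1 := norm_eq_one_of_toZMod_ne _ (htoZ ▸ hs0)
  apply hensel_sq c t₀
  have hz : PadicInt.toZMod (t₀ ^ 2 - c) = 0 := by
    rw [map_sub, map_pow, htoZ, hs]; ring
  have h1 : ‖t₀ ^ 2 - c‖ < 1 := toZMod_zero_norm_lt _ hz
  have h2 : ‖2 * t₀‖ ^ 2 = 1 := by
    rw [norm_mul, norm_two_eq_one hp, hnorm1]; norm_num
  rw [h2]; exact h1


/-- Normalize a nontrivial solution of `z² = a x² + b y²` over `ℚ_[p]` to a solution in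
`ℤ_[p]` with at least one coordinate of norm 1. -/
lemma scale_solution (a b : ℤ_[p]) (x y z : ℚ_[p]) (hne : (x, y, z) ≠ (0, 0, 0))
    (heq : z ^ 2 = (a : ℚ_[p]) * x ^ 2 + (b : ℚ_[p]) * y ^ 2) :
    ∃ X Y Z : ℤ_[p], Z ^ 2 = a * X ^ 2 + b * Y ^ 2 ∧ (‖X‖ = 1 ∨ ‖Y‖ = 1 ∨ ‖Z‖ = 1) := by
  set r := max ‖x‖ (max ‖y‖ ‖z‖) with hr
  have hne' : ¬ (x = 0 ∧ y = 0 ∧ z = 0) := by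
    rintro ⟨rfl, rfl, rfl⟩; exact hne rfl
  have hrpos : 0 < r := by
    by_contra hc
    push_neg at hc
    have hx : ‖x‖ ≤ 0 := le_trans (le_max_left _ _) hc
    have hy : ‖y‖ ≤ 0 := le_trans (le_trans (le_max_left _ _) (le_max_right _ _)) hc
    have hz : ‖z‖ ≤ 0 := le_trans (le_trans (le_max_right _ _) (le_max_right _ _)) hc
    exact hne' ⟨norm_le_zero_iff.mp hx, norm_le_zero_iff.mp hy, norm_le_zero_iff.mp hz⟩
  have hchoice : r = ‖x‖ ∨ r = ‖y‖ ∨ r = ‖z‖ := by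
    rcases max_choice ‖x‖ (max ‖y‖ ‖z‖) with h | h
    · exact Or.inl h
    · rcases max_choice ‖y‖ ‖z‖ with h' | h'
      · exact Or.inr (Or.inl (h.trans h'))
      · exact Or.inr (Or.inr (h.trans h'))
  -- pick the coordinate of maximal norm
  obtain ⟨w, hwnorm⟩ : ∃ w : ℚ_[p], ‖w‖ = r := by
    rcases hchoice with h | h | h
    exacts [⟨x, h.symm⟩, ⟨y, h.symm⟩, ⟨z, h.symm⟩]
  have hw0 : w ≠ 0 := by
    intro h; rw [h, norm_zero] at hwnorm; exact absurd hwnorm.symm (ne_of_gt hrpos)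
  set u : ℚ_[p] := (p : ℚ_[p]) ^ (-w.valuation) with hu
  have hunorm : ‖u‖ = (p : ℝ) ^ (w.valuation) := by
    rw [hu, Padic.norm_p_zpow, neg_neg]
  have hppos : (0 : ℝ) < (p : ℝ) := by exact_mod_cast hpf.out.pos
  have hrval : r = (p : ℝ) ^ (-w.valuation) := by
    rw [← hwnorm, Padic.norm_eq_zpow_neg_valuation hw0]
  have hur : ‖u‖ * r = 1 := by
    rw [hunorm, hrval, ← zpow_add₀ (ne_of_gt hppos)]
    simp
  have hu0 : u ≠ 0 := by
    intro h; rw [h, norm_zero] at hunorm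
    exact absurd hunorm.symm (ne_of_gt (zpow_pos hppos _))
  have hle : ∀ v : ℚ_[p], ‖v‖ ≤ r → ‖u * v‖ ≤ 1 := by
    intro v hv
    rw [norm_mul]
    calc ‖u‖ * ‖v‖ ≤ ‖u‖ * r := by
          apply mul_le_mul_of_nonneg_left hv (norm_nonneg _)
      _ = 1 := hur
  have hxle : ‖u * x‖ ≤ 1 := hle x (le_max_left _ _)
  have hyle : ‖u * y‖ ≤ 1 := hle y (le_trans (le_max_left _ _) (le_max_right _ _))
  have hzle : ‖u * z‖ ≤ 1 := hle z (le_trans (le_max_right _ _) (le_max_right _ _))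
  refine ⟨⟨u * x, hxle⟩, ⟨u * y, hyle⟩, ⟨u * z, hzle⟩, ?_, ?_⟩
  · apply Subtype.ext
    push_cast
    have : (u * z) ^ 2 = (a : ℚ_[p]) * (u * x) ^ 2 + (b : ℚ_[p]) * (u * y) ^ 2 := by
      linear_combination u ^ 2 * heq
    exact_mod_cast this
  · have hnorm1 : ∀ v : ℚ_[p], r = ‖v‖ → ‖u * v‖ = 1 := by
      intro v hv
      rw [norm_mul, ← hv, hur]
    rcases hchoice with h | h | h
    · exact Or.inl (hnorm1 x h)
    · exact Or.inr (Or.inl (hnorm1 y h))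
    · exact Or.inr (Or.inr (hnorm1 z h))


section Conic
variable {ℓ : ℕ} [hlf : Fact ℓ.Prime]

lemma hilbert_of_sq_right (a b : ℚ) (t : ℚ_[ℓ]) (ht : t ^ 2 = (b : ℚ_[ℓ])) :
    HilbertSymbolOne ℓ a b := by
  refine ⟨0, 1, t, ?_, by simp [ht]⟩
  simp [Prod.ext_iff]

lemma hilbert_of_sq_left (a b : ℚ) (t : ℚ_[ℓ]) (ht : t ^ 2 = (a : ℚ_[ℓ])) :
    HilbertSymbolOne ℓ a b := by
  refine ⟨1, 0, t, ?_, by simp [ht]⟩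
  simp [Prod.ext_iff]

open Polynomial in
/-- At an odd prime `ℓ` not dividing `a` and `b`, the Hilbert symbol `(a,b)_ℓ` is `+1`. -/
lemma hilbert_of_units (hodd : ℓ ≠ 2) (a b : ℤ) (ha : ¬ (ℓ : ℤ) ∣ a) (hb : ¬ (ℓ : ℤ) ∣ b) :
    HilbertSymbolOne ℓ (a : ℚ) (b : ℚ) := by
  have hA : ((a : ℤ) : ZMod ℓ) ≠ 0 := by
    rwa [Ne, ZMod.intCast_zmod_eq_zero_iff_dvd]
  have hB : ((b : ℤ) : ZMod ℓ) ≠ 0 := by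
    rwa [Ne, ZMod.intCast_zmod_eq_zero_iff_dvd]
  -- solve the conic mod ℓ
  obtain ⟨x₀, z₀, hxz⟩ : ∃ x₀ z₀ : ZMod ℓ,
      ((a : ZMod ℓ)) * x₀ ^ 2 + (b : ZMod ℓ) + (-(z₀ ^ 2)) = 0 := by
    have hcard : Fintype.card (ZMod ℓ) % 2 = 1 := by
      rw [ZMod.card]
      exact Nat.odd_iff.mp (hlf.out.odd_of_ne_two hodd)
    have h1 : ((1 : ZMod ℓ)) ≠ 0 := one_ne_zero
    obtain ⟨x₀, z₀, h⟩ := FiniteField.exists_root_sum_quadratic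
      (f := C ((a : ZMod ℓ)) * X ^ 2 + C 0 * X + C ((b : ZMod ℓ)))
      (g := C (-1) * X ^ 2 + C 0 * X + C 0)
      (Polynomial.degree_quadratic hA) (Polynomial.degree_quadratic (neg_ne_zero.mpr h1)) hcard
    refine ⟨x₀, z₀, ?_⟩
    simpa using h
  have hxz' : z₀ ^ 2 = (a : ZMod ℓ) * x₀ ^ 2 + (b : ZMod ℓ) := by linear_combination -hxz
  by_cases hz : z₀ = 0
  · -- a x₀² + b = 0 mod ℓ; then (a x₀)² = -a b, lift √(-ab)
    have hx0 : x₀ ≠ 0 := by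
      rintro rfl
      rw [hz] at hxz'
      simp at hxz'
      exact hB hxz'.symm
    have hc : PadicInt.toZMod ((-(a * b) : ℤ) : ℤ_[ℓ]) = ((a : ZMod ℓ) * x₀) * ((a : ZMod ℓ) * x₀) := by
      rw [map_intCast]
      push_cast
      have hz2 : z₀ ^ 2 = 0 := by rw [hz]; ring
      have : (a : ZMod ℓ) * x₀ ^ 2 = -(b : ZMod ℓ) := by linear_combination hz2 - hxz'
      linear_combination (-(a : ZMod ℓ)) * this
    have hc0 : PadicInt.toZMod ((-(a * b) : ℤ) : ℤ_[ℓ]) ≠ 0 := by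
      rw [map_intCast]
      push_cast
      intro h
      exact hB (by
        have := mul_eq_zero.mp (by linear_combination -h : (a : ZMod ℓ) * (b : ZMod ℓ) = 0)
        tauto)
    obtain ⟨t, ht⟩ := PadicInt.exists_sq_eq hodd _ ⟨_, hc⟩ hc0
    -- point (t, a, 0) : 0 = a t² + b a²
    refine ⟨(t : ℚ_[ℓ]), ((a : ℤ) : ℚ_[ℓ]), 0, ?_, ?_⟩
    · have : ((a : ℤ) : ℚ_[ℓ]) ≠ 0 := Int.cast_ne_zero.mpr (fun h => ha (h ▸ dvd_zero _))
      simp [Prod.ext_iff]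
      tauto
    · have ht' : ((t : ℚ_[ℓ])) ^ 2 = ((-(a * b) : ℤ) : ℚ_[ℓ]) := by
        exact_mod_cast congrArg (fun w : ℤ_[ℓ] => (w : ℚ_[ℓ])) ht
      push_cast at ht' ⊢
      rw [ht']
      ring
  · -- z₀ ≠ 0 : lift z with z² = a x₀² + b
    set X₀ : ℤ_[ℓ] := ((x₀.val : ℕ) : ℤ_[ℓ]) with hX₀
    have hXmod : PadicInt.toZMod X₀ = x₀ := by
      rw [hX₀, map_natCast]; simp [ZMod.natCast_val, ZMod.cast_id]
    set c : ℤ_[ℓ] := ((a : ℤ) : ℤ_[ℓ]) * X₀ ^ 2 + ((b : ℤ) : ℤ_[ℓ]) with hcdef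
    have hcmod : PadicInt.toZMod c = z₀ * z₀ := by
      rw [hcdef, map_add, map_mul, map_pow, map_intCast, map_intCast, hXmod, ← hxz']
      ring
    have hc0 : PadicInt.toZMod c ≠ 0 := by
      rw [hcmod]
      exact mul_ne_zero hz hz
    obtain ⟨t, ht⟩ := PadicInt.exists_sq_eq hodd _ ⟨_, hcmod⟩ hc0
    refine ⟨(X₀ : ℚ_[ℓ]), 1, (t : ℚ_[ℓ]), ?_, ?_⟩
    · simp [Prod.ext_iff]
    · have ht' : ((t : ℚ_[ℓ])) ^ 2 = ((c : ℤ_[ℓ]) : ℚ_[ℓ]) := by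
        exact_mod_cast congrArg (fun w : ℤ_[ℓ] => (w : ℚ_[ℓ])) ht
      rw [ht', hcdef]
      push_cast
      ring

end Conic
/-- A natural number `≡ 1 mod 8` is a square in `ℤ_[2]`. -/
lemma two_adic_sq (c : ℕ) (h : c % 8 = 1) : ∃ t : ℤ_[2], t ^ 2 = (c : ℤ_[2]) := by
  obtain ⟨k, hk⟩ : ∃ k, c = 8 * k + 1 := ⟨c / 8, by omega⟩
  have key : ‖(1 : ℤ_[2]) ^ 2 - (c : ℤ_[2])‖ < ‖2 * (1 : ℤ_[2])‖ ^ 2 := by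
    have h8 : ((c : ℤ_[2]) - 1) = 2 ^ 3 * (k : ℤ_[2]) := by
      rw [hk]; push_cast; ring
    have hn2 : ‖(2 : ℤ_[2])‖ = (2 : ℝ)⁻¹ := by
      have := PadicInt.norm_p (p := 2); exact_mod_cast this
    have h1 : ‖(1 : ℤ_[2]) ^ 2 - (c : ℤ_[2])‖ = ‖(c : ℤ_[2]) - 1‖ := by
      rw [one_pow, ← norm_neg]; ring_nf
    rw [h1, h8, norm_mul, norm_pow, hn2, norm_mul, hn2, norm_one, mul_one]
    have : ‖(k : ℤ_[2])‖ ≤ 1 := PadicInt.norm_le_one _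
    nlinarith [norm_nonneg (k : ℤ_[2])]
  exact hensel_sq _ _ key
section NoSolution
variable {ℓ : ℕ} [hlf : Fact ℓ.Prime]

lemma norm_le_inv_of_lt_one (v : ℤ_[ℓ]) (h : ‖v‖ < 1) : ‖v‖ ≤ (ℓ : ℝ)⁻¹ := by
  obtain ⟨w, rfl⟩ := (PadicInt.norm_lt_one_iff_dvd v).mp h
  rw [norm_mul, PadicInt.norm_p]
  have h1 : ‖w‖ ≤ 1 := PadicInt.norm_le_one w
  have h2 : (0:ℝ) ≤ (ℓ : ℝ)⁻¹ := by positivity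
  nlinarith

/-- If `v_ℓ(a) = 1` and `b` is a non-residue unit at the odd prime `ℓ`, then
`(a,b)_ℓ = -1`. -/
lemma hilbert_neg_odd (hodd : ℓ ≠ 2) (a m b : ℤ) (ham : a = ℓ * m) (hm : ¬ (ℓ : ℤ) ∣ m)
    (hbn : ¬ IsSquare ((b : ℤ) : ZMod ℓ)) :
    ¬ HilbertSymbolOne ℓ (a : ℚ) (b : ℚ) := by
  have hb : ¬ (ℓ : ℤ) ∣ b := by
    intro hdvd
    exact hbn (by
      rw [(ZMod.intCast_zmod_eq_zero_iff_dvd b ℓ).mpr hdvd]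
      exact ⟨0, by ring⟩)
  rintro ⟨x, y, z, hne, heq⟩
  have heq' : z ^ 2 = ((((a : ℤ) : ℤ_[ℓ]) : ℚ_[ℓ])) * x ^ 2 + ((((b : ℤ) : ℤ_[ℓ]) : ℚ_[ℓ])) * y ^ 2 := by
    rw [heq]; push_cast; ring
  obtain ⟨X, Y, Z, hEq, hdisj⟩ := scale_solution ((a : ℤ) : ℤ_[ℓ]) ((b : ℤ) : ℤ_[ℓ]) x y z hne heq'
  -- reduce mod ℓ
  have hmod : PadicInt.toZMod Z ^ 2 =
      ((b : ZMod ℓ)) * PadicInt.toZMod Y ^ 2 := by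
    have := congrArg PadicInt.toZMod hEq
    rw [map_pow, map_add, map_mul, map_mul, map_pow, map_pow, map_intCast, map_intCast] at this
    have hℓ0 : ((a : ℤ) : ZMod ℓ) = 0 := by
      rw [ham]; push_cast; simp
    rw [hℓ0] at this
    rw [this]; ring
  have hY0 : PadicInt.toZMod Y = 0 := by
    by_contra hY
    apply hbn
    refine ⟨PadicInt.toZMod Z * (PadicInt.toZMod Y)⁻¹, ?_⟩
    field_simp
    linear_combination -hmod
  have hZ0 : PadicInt.toZMod Z = 0 := by
    have := hmod
    rw [hY0] at this
    simpa [pow_eq_zero_iff] using this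
  have hYlt : ‖Y‖ ≤ (ℓ : ℝ)⁻¹ := norm_le_inv_of_lt_one Y (toZMod_zero_norm_lt Y hY0)
  have hZlt : ‖Z‖ ≤ (ℓ : ℝ)⁻¹ := norm_le_inv_of_lt_one Z (toZMod_zero_norm_lt Z hZ0)
  -- now a X² = Z² - b Y² has norm ≤ ℓ⁻²
  have hb1 : ‖((b : ℤ) : ℤ_[ℓ])‖ ≤ 1 := PadicInt.norm_le_one _
  have hℓpos : (0:ℝ) < (ℓ : ℝ) := by exact_mod_cast hlf.out.pos
  have hℓ1 : (1:ℝ) < (ℓ : ℝ) := by exact_mod_cast hlf.out.one_lt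
  have hinv : (0:ℝ) < (ℓ : ℝ)⁻¹ := by positivity
  have haX : ‖((a : ℤ) : ℤ_[ℓ]) * X ^ 2‖ ≤ (ℓ : ℝ)⁻¹ * (ℓ : ℝ)⁻¹ := by
    have h1 : ((a : ℤ) : ℤ_[ℓ]) * X ^ 2 = Z ^ 2 - ((b : ℤ) : ℤ_[ℓ]) * Y ^ 2 := by
      rw [hEq]; ring
    rw [h1]
    have h2 : ‖Z ^ 2‖ ≤ (ℓ : ℝ)⁻¹ * (ℓ : ℝ)⁻¹ := by
      rw [norm_pow]
      calc ‖Z‖ ^ 2 = ‖Z‖ * ‖Z‖ := sq ‖Z‖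
        _ ≤ (ℓ : ℝ)⁻¹ * (ℓ : ℝ)⁻¹ := by
            apply mul_le_mul hZlt hZlt (norm_nonneg _) (le_of_lt hinv)
    have h3 : ‖((b : ℤ) : ℤ_[ℓ]) * Y ^ 2‖ ≤ (ℓ : ℝ)⁻¹ * (ℓ : ℝ)⁻¹ := by
      rw [norm_mul, norm_pow]
      have : ‖Y‖ ^ 2 ≤ (ℓ : ℝ)⁻¹ * (ℓ : ℝ)⁻¹ := by
        calc ‖Y‖ ^ 2 = ‖Y‖ * ‖Y‖ := sq ‖Y‖
          _ ≤ (ℓ : ℝ)⁻¹ * (ℓ : ℝ)⁻¹ := by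
              apply mul_le_mul hYlt hYlt (norm_nonneg _) (le_of_lt hinv)
      nlinarith [norm_nonneg (Y : ℤ_[ℓ])]
    calc ‖Z ^ 2 - ((b : ℤ) : ℤ_[ℓ]) * Y ^ 2‖ ≤ max ‖Z ^ 2‖ ‖-(((b : ℤ) : ℤ_[ℓ]) * Y ^ 2)‖ := by
          rw [sub_eq_add_neg]; exact PadicInt.nonarchimedean _ _
      _ = max ‖Z ^ 2‖ ‖((b : ℤ) : ℤ_[ℓ]) * Y ^ 2‖ := by rw [norm_neg]
      _ ≤ (ℓ : ℝ)⁻¹ * (ℓ : ℝ)⁻¹ := max_le h2 h3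
  -- but ‖a‖ = ℓ⁻¹ exactly
  have hanorm : ‖((a : ℤ) : ℤ_[ℓ])‖ = (ℓ : ℝ)⁻¹ := by
    have hmn : ‖((m : ℤ) : ℤ_[ℓ])‖ = 1 := by
      refine le_antisymm (PadicInt.norm_le_one _) (not_lt.mp fun hlt => hm ?_)
      exact_mod_cast (PadicInt.norm_int_lt_one_iff_dvd m).mp hlt
    rw [ham]
    push_cast
    rw [norm_mul, hmn, mul_one]
    exact_mod_cast PadicInt.norm_p
  have hXlt : ‖X‖ < 1 := by
    rw [norm_mul, norm_pow, hanorm] at haX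
    have hX2 : ‖X‖ ^ 2 ≤ (ℓ : ℝ)⁻¹ := by
      have := mul_le_mul_of_nonneg_left haX (le_of_lt hℓpos)
      rw [← mul_assoc, ← mul_assoc, mul_inv_cancel₀ (ne_of_gt hℓpos), one_mul] at this
      linarith
    nlinarith [norm_nonneg (X : ℤ_[ℓ]), inv_lt_one_of_one_lt₀ hℓ1]
  rcases hdisj with h | h | h
  · exact absurd h (ne_of_lt hXlt)
  · exact absurd h (by
      have : ‖Y‖ < 1 := lt_of_le_of_lt hYlt (inv_lt_one_of_one_lt₀ hℓ1)
      exact ne_of_lt this)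
  · exact absurd h (by
      have : ‖Z‖ < 1 := lt_of_le_of_lt hZlt (inv_lt_one_of_one_lt₀ hℓ1)
      exact ne_of_lt this)
end NoSolution
section Two

lemma zmod8_no_sol : ∀ (k w x y z : ZMod (2 ^ 3)),
    (x = 2 * w + 1 ∨ y = 2 * w + 1 ∨ z = 2 * w + 1) →
    z ^ 2 ≠ 2 * (2 * k + 1) * x ^ 2 + 5 * y ^ 2 := by decide

/-- In `ℤ_[2]`, a unit (norm-one element) is of the form `2q+1`. -/
lemma unit_odd (X : ℤ_[2]) (h : ‖X‖ = 1) : ∃ Q : ℤ_[2], X = 2 * Q + 1 := by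
  have h0 : PadicInt.toZMod X ≠ 0 := by
    intro hc
    exact absurd h (ne_of_lt (toZMod_zero_norm_lt X hc))
  have h1 : PadicInt.toZMod X = 1 := by
    have h2 : ∀ v : ZMod 2, v = 0 ∨ v = 1 := by decide
    rcases h2 (PadicInt.toZMod X) with h | h
    · exact absurd h h0
    · exact h
  have hker : PadicInt.toZMod (X - 1) = 0 := by rw [map_sub, map_one, h1, sub_self]
  have : X - 1 ∈ IsLocalRing.maximalIdeal ℤ_[2] := by rw [← PadicInt.ker_toZMod]; exact hker
  rw [PadicInt.maximalIdeal_eq_span_p, Ideal.mem_span_singleton] at this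
  obtain ⟨Q, hQ⟩ := this
  refine ⟨Q, ?_⟩
  have h2 : ((2 : ℕ) : ℤ_[2]) = 2 := by norm_cast
  rw [h2] at hQ
  linear_combination hQ

/-- `(a, b)_2 = -1` when `a = 2·odd` and `b ≡ 5 mod 8`. -/
lemma hilbert_neg_two (a m : ℤ) (b : ℕ) (ham : a = 2 * m) (hm : m % 2 = 1) (hb : b % 8 = 5) :
    ¬ HilbertSymbolOne 2 (a : ℚ) (b : ℚ) := by
  rintro ⟨x, y, z, hne, heq⟩
  have heq' : z ^ 2 = ((((a : ℤ) : ℤ_[2]) : ℚ_[2])) * x ^ 2 + ((((b : ℤ) : ℤ_[2]) : ℚ_[2])) * y ^ 2 := by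
    rw [heq]; push_cast; ring
  obtain ⟨X, Y, Z, hEq, hdisj⟩ := scale_solution ((a : ℤ) : ℤ_[2]) ((b : ℤ) : ℤ_[2]) x y z hne heq'
  set φ : ℤ_[2] →+* ZMod (2 ^ 3) := PadicInt.toZModPow 3 with hφ
  have hmod : φ Z ^ 2 = ((a : ℤ) : ZMod (2 ^ 3)) * φ X ^ 2 + ((b : ℕ) : ZMod (2 ^ 3)) * φ Y ^ 2 := by
    have := congrArg φ hEq
    rw [map_pow, map_add, map_mul, map_mul, map_pow, map_pow, map_intCast, map_intCast] at this
    rw [this]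
    norm_cast
  -- a = 2(2k+1) in ZMod 8
  obtain ⟨k, hk⟩ : ∃ k : ℤ, m = 2 * k + 1 := ⟨m / 2, by omega⟩
  have ha8 : ((a : ℤ) : ZMod (2 ^ 3)) = 2 * (2 * ((k : ℤ) : ZMod (2 ^ 3)) + 1) := by
    rw [ham, hk]; push_cast; ring
  -- b = 5 in ZMod 8
  have hb8 : ((b : ℕ) : ZMod (2 ^ 3)) = 5 := by
    obtain ⟨t, ht⟩ : ∃ t, b = 8 * t + 5 := ⟨b / 8, by omega⟩
    rw [ht]; push_cast
    have h8 : ((8 : ℕ) : ZMod (2 ^ 3)) = 0 := by decide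
    push_cast at h8
    rw [h8]; ring
  -- one coordinate is odd
  have hodd : ∃ w : ZMod (2 ^ 3), φ X = 2 * w + 1 ∨ φ Y = 2 * w + 1 ∨ φ Z = 2 * w + 1 := by
    rcases hdisj with h | h | h
    · obtain ⟨Q, hQ⟩ := unit_odd X h
      exact ⟨φ Q, Or.inl (by rw [hQ]; simp [map_add, map_mul, map_one, map_ofNat])⟩
    · obtain ⟨Q, hQ⟩ := unit_odd Y h
      exact ⟨φ Q, Or.inr (Or.inl (by rw [hQ]; simp [map_add, map_mul, map_one, map_ofNat]))⟩
    · obtain ⟨Q, hQ⟩ := unit_odd Z h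
      exact ⟨φ Q, Or.inr (Or.inr (by rw [hQ]; simp [map_add, map_mul, map_one, map_ofNat]))⟩
  obtain ⟨w, hw⟩ := hodd
  exact zmod8_no_sol ((k : ℤ) : ZMod (2 ^ 3)) w (φ X) (φ Y) (φ Z) hw
    (by rw [hmod, ha8, hb8])

end Two

lemma coprime_of_modEq {a b n : ℕ} (h : a ≡ b [MOD n]) (hb : Nat.Coprime b n) :
    Nat.Coprime a n := by
  have hg : Nat.gcd a n = Nat.gcd b n := by
    rw [Nat.gcd_comm a n, Nat.gcd_rec n a, Nat.gcd_comm b n, Nat.gcd_rec n b, h]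
  unfold Nat.Coprime at hb ⊢
  rw [hg]; exact hb

/-- The quadratic reciprocity computation: `-D` is a square mod `p`. -/
lemma legendre_minus_D (D₀ N D p : ℕ) [hpf : Fact p.Prime]
    (hsf : Squarefree D₀) (heven : Even D₀.primeFactors.card) (hcop : Nat.Coprime N D₀)
    (hD : D = D₀ * N) (hN : 0 < N) (hpD : ¬ p ∣ 2 * D)
    (h8 : p % 8 = (if 2 ∣ D₀ then 5 else 1))
    (hq : ∀ q : ℕ, q.Prime → q ≠ 2 → q ∣ D₀ → ¬ IsSquare ((p : ZMod q)))
    (hq' : ∀ q : ℕ, q.Prime → q ≠ 2 → q ∣ N → p ≡ 1 [MOD q]) :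
    IsSquare ((-(D : ℤ) : ZMod p)) := by
  have hD₀pos : 0 < D₀ := Nat.pos_of_ne_zero (fun h => by simp [h] at hsf)
  have hDpos : 0 < D := hD ▸ Nat.mul_pos hD₀pos hN
  have hp2 : p ≠ 2 := by
    intro h
    apply hpD
    rw [h]; exact Dvd.dvd.mul_right (dvd_refl 2) D
  have hp4 : p % 4 = 1 := by
    have h48 : p % 4 = p % 8 % 4 := (Nat.mod_mod_of_dvd p (by norm_num)).symm
    by_cases h2 : 2 ∣ D₀ <;> simp [h2] at h8 <;> omega
  -- the Legendre symbol as a monoid hom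
  set F : ℤ →* ℤ :=
    { toFun := legendreSym p
      map_one' := by
        refine (legendreSym.eq_one_iff p ?_).mpr ?_
        · simp
        · simp
      map_mul' := legendreSym.mul p } with hF
  -- the symbol at -1
  have hFneg1 : F (-1) = 1 := by
    rw [hF]
    show legendreSym p (-1) = 1
    rw [legendreSym.at_neg_one hp2, ZMod.χ₄_nat_one_mod_four hp4]
  -- the symbol at each prime factor of D
  have hfac : ∀ q ∈ D.primeFactors, F ((q : ℤ)) ^ (D.factorization q)
      = (if q ∣ D₀ then -1 else 1) := by
    intro q hqmem
    obtain ⟨hqp, hqdvd, -⟩ := Nat.mem_primeFactors.mp hqmem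
    haveI : Fact q.Prime := ⟨hqp⟩
    by_cases hqD₀ : q ∣ D₀
    · rw [if_pos hqD₀]
      -- exponent is 1
      have hexp : D.factorization q = 1 := by
        rw [hD, Nat.factorization_mul hD₀pos.ne' hN.ne']
        have h1 : D₀.factorization q = 1 := by
          have hle := (Nat.squarefree_iff_factorization_le_one hD₀pos.ne').mp hsf q
          have hge : 1 ≤ D₀.factorization q :=
            (Nat.Prime.factorization_pos_of_dvd hqp hD₀pos.ne' hqD₀)
          omega
        have h2 : N.factorization q = 0 := by
          apply Nat.factorization_eq_zero_of_not_dvd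
          intro hqN
          have hc1 : Nat.Coprime q D₀ := Nat.Coprime.coprime_dvd_left hqN hcop
          have := Nat.Coprime.eq_one_of_dvd hc1 hqD₀
          exact hqp.one_lt.ne' this
        simp [h1, h2]
      rw [hexp, pow_one, hF]
      show legendreSym p (q : ℤ) = -1
      by_cases hq2 : q = 2
      · subst hq2
        rw [if_pos hqD₀] at h8
        have : legendreSym p 2 = ZMod.χ₈ (p : ZMod 8) := legendreSym.at_two hp2
        rw [(by norm_num : ((2:ℕ):ℤ) = 2), this, ZMod.χ₈_nat_mod_eight, h8]
        decide
      · rw [← legendreSym.quadratic_reciprocity_one_mod_four hp4 hq2]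
        refine legendreSym.eq_neg_one_iff q |>.mpr ?_
        have := hq q hqp hq2 hqD₀
        intro hc
        apply this
        rwa [(by push_cast; ring : ((p:ℤ) : ZMod q) = ((p:ℕ) : ZMod q))] at hc
    · rw [if_neg hqD₀]
      have hFq : F ((q : ℤ)) = 1 := by
        rw [hF]
        show legendreSym p (q : ℤ) = 1
        by_cases hq2 : q = 2
        · subst hq2
          rw [if_neg hqD₀] at h8
          have : legendreSym p 2 = ZMod.χ₈ (p : ZMod 8) := legendreSym.at_two hp2
          rw [(by norm_num : ((2:ℕ):ℤ) = 2), this, ZMod.χ₈_nat_mod_eight, h8]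
          decide
        · have hqN : q ∣ N := by
            rcases (Nat.Prime.dvd_mul hqp).mp (hD ▸ hqdvd) with h | h
            · exact absurd h hqD₀
            · exact h
          have hmod := hq' q hqp hq2 hqN
          rw [← legendreSym.quadratic_reciprocity_one_mod_four hp4 hq2]
          refine legendreSym.eq_one_iff q ?_ |>.mpr ?_
          · have : ((p:ℤ) : ZMod q) = 1 := by
              have := (ZMod.natCast_eq_natCast_iff p 1 q).mpr hmod
              push_cast at this ⊢
              simpa using this
            rw [this]; exact one_ne_zero
          · have : ((p:ℤ) : ZMod q) = 1 := by
              have := (ZMod.natCast_eq_natCast_iff p 1 q).mpr hmod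
              push_cast at this ⊢
              simpa using this
            rw [this]; exact IsSquare.one
      rw [hFq, one_pow]
  -- assemble the product
  have hDfac : (D : ℤ) = ∏ q ∈ D.primeFactors, (q : ℤ) ^ (D.factorization q) := by
    conv_lhs => rw [← Nat.factorization_prod_pow_eq_self hDpos.ne']
    rw [Nat.prod_factorization_eq_prod_primeFactors]
    push_cast
    rfl
  have hFD : F ((D : ℤ)) = ∏ q ∈ D.primeFactors, (if q ∣ D₀ then (-1 : ℤ) else 1) := by
    rw [hDfac, map_prod]
    refine Finset.prod_congr rfl fun q hqmem => ?_
    rw [map_pow]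
    exact hfac q hqmem
  have hsub : D₀.primeFactors ⊆ D.primeFactors := by
    apply Nat.primeFactors_mono ⟨N, hD⟩ hDpos.ne'
  have hprod : ∏ q ∈ D.primeFactors, (if q ∣ D₀ then (-1 : ℤ) else 1)
      = (-1 : ℤ) ^ D₀.primeFactors.card := by
    rw [← Finset.prod_subset hsub ?h1]
    · rw [Finset.prod_congr rfl (fun q hqmem => ?_), Finset.prod_const]
      rw [if_pos (Nat.mem_primeFactors.mp hqmem).2.1]
    · intro q hqD hqnD₀
      rw [if_neg]
      intro hdvd
      exact hqnD₀ (Nat.mem_primeFactors.mpr ⟨(Nat.mem_primeFactors.mp hqD).1, hdvd, hD₀pos.ne'⟩)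
  have hfinal : legendreSym p (-(D : ℤ)) = 1 := by
    have h1 : (-(D : ℤ)) = (-1) * (D : ℤ) := by ring
    rw [h1]
    have : F ((-1) * (D : ℤ)) = F (-1) * F ((D : ℤ)) := map_mul F _ _
    rw [show legendreSym p (-1 * (D:ℤ)) = F ((-1) * (D : ℤ)) from rfl, this, hFneg1, hFD, hprod,
      one_mul, Even.neg_one_pow heven]
  have hne : (((-(D : ℤ)) : ℤ) : ZMod p) ≠ 0 := by
    rw [Int.cast_neg, Ne, neg_eq_zero]
    intro hc
    rw [ZMod.intCast_zmod_eq_zero_iff_dvd, Int.natCast_dvd_natCast] at hc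
    exact hpD (Dvd.dvd.mul_left hc 2)
  have := (legendreSym.eq_one_iff p hne).mp hfinal
  rwa [Int.cast_neg] at this
/-- Let `D₀` be a product of an even number of distinct primes (the
discriminant of an indefinite quaternion algebra over `ℚ`), `S` the set of primes dividing
`D₀`, and `D = D₀·N` with `N` coprime to `D₀`. Then there is a prime `p` not dividing `2D`
such that for every prime `ℓ`, the Hilbert symbol `(-D, p)_ℓ = -1` if and only if `ℓ ∈ S`,
i.e. `ℓ ∣ D₀`. -/
theorem exists_auxiliary_prime (D₀ N D : ℕ) (hsf : Squarefree D₀)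
    (heven : Even D₀.primeFactors.card) (hcop : Nat.Coprime N D₀) (hD : D = D₀ * N)
    (hN : 0 < N) :
    ∃ p : ℕ, p.Prime ∧ ¬ p ∣ 2 * D ∧
      ∀ (ℓ : ℕ) [Fact ℓ.Prime],
        (¬ HilbertSymbolOne ℓ (-(D : ℚ)) (p : ℚ)) ↔ ℓ ∣ D₀ := by
  have hD₀pos : 0 < D₀ := Nat.pos_of_ne_zero (fun h => by simp [h] at hsf)
  have hDpos : 0 < D := hD ▸ Nat.mul_pos hD₀pos hN
  -- choose a nonresidue mod each odd prime
  have hnr₀ : ∀ q : ℕ, ∃ n : ℕ, (q.Prime ∧ q ≠ 2) → ¬ IsSquare ((n : ℕ) : ZMod q) := by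
    intro q
    by_cases h : q.Prime ∧ q ≠ 2
    · haveI : Fact q.Prime := ⟨h.1⟩
      obtain ⟨n, hn⟩ := FiniteField.exists_nonsquare (F := ZMod q)
        (by rw [ZMod.ringChar_zmod_n]; exact h.2)
      refine ⟨n.val, fun _ => ?_⟩
      rwa [ZMod.natCast_val, ZMod.cast_id]
    · exact ⟨0, fun hc => absurd hc h⟩
  choose nr hnr using hnr₀
  -- residue targets
  set c : ℕ → ℕ := fun q => if q = 8 then (if 2 ∣ D₀ then 5 else 1)
    else (if q ∣ D₀ then nr q else 1) with hc
  -- CRT setup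
  set Q : Finset ℕ := D.primeFactors.erase 2 with hQdef
  have hQmem : ∀ q ∈ Q, q.Prime ∧ q ≠ 2 ∧ q ∣ D := by
    intro q hq
    obtain ⟨hne, hmem⟩ := Finset.mem_erase.mp hq
    obtain ⟨h1, h2, -⟩ := Nat.mem_primeFactors.mp hmem
    exact ⟨h1, hne, h2⟩
  set l : List ℕ := 8 :: Q.toList with hl
  have h8Q : (8 : ℕ) ∉ Q.toList := by
    intro h
    have := (hQmem 8 (Finset.mem_toList.mp h)).1
    norm_num at this
  have hco : l.Pairwise (Function.onFun Nat.Coprime id) := by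
    rw [hl, List.pairwise_cons]
    constructor
    · intro q hq
      have hq' := hQmem q (Finset.mem_toList.mp hq)
      show Nat.Coprime 8 q
      have h2q : Nat.Coprime 2 q := (Nat.coprime_primes Nat.prime_two hq'.1).mpr (Ne.symm hq'.2.1)
      exact Nat.Coprime.pow_left 3 h2q
    · refine (Finset.nodup_toList Q).pairwise_of_forall_ne fun a ha b hb hab => ?_
      have ha' := hQmem a (Finset.mem_toList.mp ha)
      have hb' := hQmem b (Finset.mem_toList.mp hb)
      exact (Nat.coprime_primes ha'.1 hb'.1).mpr hab
  set rr := Nat.chineseRemainderOfList c id l hco with hrr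
  set M : ℕ := (l.map id).prod with hM
  have hMl : M = l.prod := by rw [hM, List.map_id]
  have hMpos : 0 < M := by
    rw [hMl]
    refine CanonicallyOrderedAdd.list_prod_pos.mpr fun x hx => ?_
    rcases List.mem_cons.mp hx with rfl | hx
    · norm_num
    · exact (hQmem x (Finset.mem_toList.mp hx)).1.pos
  haveI : NeZero M := ⟨hMpos.ne'⟩
  -- the residues are coprime to the modulus
  have hcq : ∀ q ∈ l, Nat.Coprime (c q) q := by
    intro q hq
    rcases List.mem_cons.mp hq with rfl | hq
    · rw [hc]
      simp only [if_pos rfl]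
      by_cases h2 : 2 ∣ D₀ <;> simp [h2] <;> decide
    · obtain ⟨hqp, hq2, -⟩ := hQmem q (Finset.mem_toList.mp hq)
      have hq8 : q ≠ 8 := by rintro rfl; norm_num at hqp
      rw [hc]
      simp only [if_neg hq8]
      by_cases hqD₀ : q ∣ D₀
      · rw [if_pos hqD₀]
        refine Nat.Coprime.symm ((Nat.Prime.coprime_iff_not_dvd hqp).mpr ?_)
        intro hdvd
        apply hnr q ⟨hqp, hq2⟩
        rw [(ZMod.natCast_eq_zero_iff (nr q) q).mpr hdvd]
        exact ⟨0, by ring⟩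
      · rw [if_neg hqD₀]
        exact Nat.coprime_one_left q
  have hrunit : IsUnit ((rr : ℕ) : ZMod M) := by
    rw [ZMod.isUnit_iff_coprime]
    rw [hMl]
    refine Nat.coprime_list_prod_right_iff.mpr fun q hq => ?_
    exact coprime_of_modEq (rr.prop q hq) (hcq q hq)
  -- Dirichlet
  obtain ⟨p, hpgt, hpp, hpcast⟩ :=
    Nat.forall_exists_prime_gt_and_eq_mod (q := M) (a := ((rr : ℕ) : ZMod M)) hrunit (2 * D)
  haveI hpfact : Fact p.Prime := ⟨hpp⟩
  have hpD : ¬ p ∣ 2 * D := by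
    intro hdvd
    have := Nat.le_of_dvd (by omega) hdvd
    omega
  have hp2 : p ≠ 2 := by
    intro h; rw [h] at hpgt; omega
  -- residues of p
  have hpmod : ∀ q ∈ l, p ≡ c q [MOD q] := by
    intro q hq
    have h1 : p ≡ rr [MOD M] := (ZMod.natCast_eq_natCast_iff p rr M).mp hpcast
    have h2 : (q : ℕ) ∣ M := by rw [hMl]; exact List.dvd_prod hq
    exact (Nat.ModEq.of_dvd h2 h1).trans (rr.prop q hq)
  have h8 : p % 8 = (if 2 ∣ D₀ then 5 else 1) := by
    have := hpmod 8 (List.mem_cons_self)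
    rw [hc] at this
    simp only [if_pos rfl] at this
    unfold Nat.ModEq at this
    by_cases h2 : 2 ∣ D₀ <;> simp [h2] at this ⊢ <;> omega
  have hQof : ∀ q : ℕ, q.Prime → q ≠ 2 → q ∣ D → q ∈ Q := by
    intro q hqp hq2 hqD
    exact Finset.mem_erase.mpr ⟨hq2, Nat.mem_primeFactors.mpr ⟨hqp, hqD, hDpos.ne'⟩⟩
  have hq : ∀ q : ℕ, q.Prime → q ≠ 2 → q ∣ D₀ → ¬ IsSquare ((p : ZMod q)) := by
    intro q hqp hq2 hqD₀
    have hqD : q ∣ D := hD ▸ hqD₀.mul_right N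
    have hmem : q ∈ l := List.mem_cons_of_mem _ (Finset.mem_toList.mpr (hQof q hqp hq2 hqD))
    have := hpmod q hmem
    rw [hc] at this
    have hq8 : q ≠ 8 := by rintro rfl; norm_num at hqp
    simp only [if_neg hq8, if_pos hqD₀] at this
    have : (p : ZMod q) = ((nr q : ℕ) : ZMod q) := (ZMod.natCast_eq_natCast_iff _ _ _).mpr this
    rw [this]
    exact hnr q ⟨hqp, hq2⟩
  have hq' : ∀ q : ℕ, q.Prime → q ≠ 2 → q ∣ N → p ≡ 1 [MOD q] := by
    intro q hqp hq2 hqN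
    have hqD : q ∣ D := hD ▸ hqN.mul_left D₀
    have hqD₀ : ¬ q ∣ D₀ := by
      intro hdvd
      have hc1 : Nat.Coprime q D₀ := Nat.Coprime.coprime_dvd_left hqN hcop
      exact hqp.one_lt.ne' (Nat.Coprime.eq_one_of_dvd hc1 hdvd)
    have hmem : q ∈ l := List.mem_cons_of_mem _ (Finset.mem_toList.mpr (hQof q hqp hq2 hqD))
    have := hpmod q hmem
    rw [hc] at this
    have hq8 : q ≠ 8 := by rintro rfl; norm_num at hqp
    simp only [if_neg hq8, if_neg hqD₀] at this
    exact this
  -- the main conclusion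
  refine ⟨p, hpp, hpD, fun ℓ hℓf => ?_⟩
  have hpℓD : ¬ p ∣ D := fun h => hpD (h.mul_left 2)
  -- first: ℓ ∣ D₀ → no solution
  have hneg : ℓ ∣ D₀ → ¬ HilbertSymbolOne ℓ (-(D : ℚ)) (p : ℚ) := by
    intro hdvd
    -- v_ℓ(D) = 1 : D = ℓ * d with ℓ ∤ d
    obtain ⟨d₀, hd₀⟩ := id hdvd
    have hℓp : ℓ.Prime := hℓf.out
    have hℓd₀ : ¬ ℓ ∣ d₀ := by
      intro hdd
      obtain ⟨e, he⟩ := hdd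
      have : ℓ * ℓ ∣ D₀ := ⟨e, by rw [hd₀, he]; ring⟩
      exact hℓp.one_lt.ne' (Nat.isUnit_iff.mp (hsf ℓ this))
    have hℓN : ¬ ℓ ∣ N := by
      intro hdd
      have hc1 : Nat.Coprime ℓ D₀ := Nat.Coprime.coprime_dvd_left hdd hcop
      exact hℓp.one_lt.ne' (Nat.Coprime.eq_one_of_dvd hc1 hdvd)
    set d : ℕ := d₀ * N with hd'
    have hDd : D = ℓ * d := by rw [hD, hd₀, hd']; ring
    have hℓd : ¬ ℓ ∣ d := by
      intro hdd
      rcases (Nat.Prime.dvd_mul hℓp).mp hdd with h | h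
      · exact hℓd₀ h
      · exact hℓN h
    by_cases hℓ2 : ℓ = 2
    · -- 2-adic case
      subst hℓ2
      have hd2 : d % 2 = 1 := by omega
      have hm : (-(d : ℤ)) % 2 = 1 := by omega
      have ha : -(D : ℤ) = 2 * (-(d : ℤ)) := by rw [hDd]; push_cast; ring
      have h85 : p % 8 = 5 := by rw [h8, if_pos hdvd]
      have := hilbert_neg_two (-(D : ℤ)) (-(d : ℤ)) p ha hm h85
      rwa [(by push_cast; ring : ((-(D : ℤ) : ℤ) : ℚ) = -(D : ℚ)),
        (by push_cast; ring : ((p : ℕ) : ℚ) = (p : ℚ))] at this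
    · -- odd case
      have ha : -(D : ℤ) = (ℓ : ℤ) * (-(d : ℤ)) := by rw [hDd]; push_cast; ring
      have hm : ¬ (ℓ : ℤ) ∣ (-(d : ℤ)) := by
        rw [dvd_neg, Int.natCast_dvd_natCast]
        exact hℓd
      have hbn : ¬ IsSquare (((p : ℤ) : ZMod ℓ)) := by
        have := hq ℓ hℓp hℓ2 hdvd
        rwa [(by push_cast; ring : (((p:ℕ) : ℤ) : ZMod ℓ) = ((p : ℕ) : ZMod ℓ))]
      have := hilbert_neg_odd hℓ2 (-(D : ℤ)) (-(d : ℤ)) (p : ℤ) ha hm hbn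
      rwa [(by push_cast; ring : ((-(D : ℤ) : ℤ) : ℚ) = -(D : ℚ)),
        (by push_cast; ring : (((p : ℕ) : ℤ) : ℚ) = (p : ℚ))] at this
  -- second: ℓ ∤ D₀ → solution
  have hpos : ¬ ℓ ∣ D₀ → HilbertSymbolOne ℓ (-(D : ℚ)) (p : ℚ) := by
    intro hnd
    have hℓp : ℓ.Prime := hℓf.out
    by_cases hℓeq : ℓ = p
    · subst hℓeq
      have hsq : IsSquare ((-(D : ℤ) : ZMod ℓ)) :=
        legendre_minus_D D₀ N D ℓ hsf heven hcop hD hN hpD h8 hq hq'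
      have hℓ2 : ℓ ≠ 2 := hp2
      set cc : ℤ_[ℓ] := ((-(D : ℤ) : ℤ) : ℤ_[ℓ]) with hcc
      have hmod : PadicInt.toZMod cc = ((-(D : ℤ) : ℤ) : ZMod ℓ) := by
        rw [hcc, map_intCast]
      have hne : PadicInt.toZMod cc ≠ 0 := by
        rw [hmod]
        intro hzero
        rw [Int.cast_neg, neg_eq_zero, ZMod.intCast_zmod_eq_zero_iff_dvd,
          Int.natCast_dvd_natCast] at hzero
        exact hpℓD hzero
      have hsq' : IsSquare (PadicInt.toZMod cc) := by
        rw [hmod]; push_cast at hsq ⊢; exact hsq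
      obtain ⟨t, ht⟩ := PadicInt.exists_sq_eq hℓ2 cc hsq' hne
      refine hilbert_of_sq_left _ _ (t : ℚ_[ℓ]) ?_
      have : ((t : ℚ_[ℓ])) ^ 2 = ((cc : ℤ_[ℓ]) : ℚ_[ℓ]) := by exact_mod_cast congrArg _ ht
      rw [this, hcc]
      push_cast
      ring
    by_cases hℓ2 : ℓ = 2
    · subst hℓ2
      have h81 : p % 8 = 1 := by rw [h8, if_neg hnd]
      obtain ⟨t, ht⟩ := two_adic_sq p h81
      refine hilbert_of_sq_right _ _ (t : ℚ_[2]) ?_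
      have : ((t : ℚ_[2])) ^ 2 = (((p : ℕ) : ℤ_[2]) : ℚ_[2]) := by exact_mod_cast congrArg _ ht
      rw [this]
      push_cast
      ring
    by_cases hℓN : ℓ ∣ N
    · have hmod := hq' ℓ hℓp hℓ2 hℓN
      have h1 : ((p : ℕ) : ZMod ℓ) = 1 := by
        have := (ZMod.natCast_eq_natCast_iff p 1 ℓ).mpr hmod
        simpa using this
      set cc : ℤ_[ℓ] := ((p : ℕ) : ℤ_[ℓ]) with hcc
      have hmod' : PadicInt.toZMod cc = ((p : ℕ) : ZMod ℓ) := by rw [hcc, map_natCast]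
      have hne : PadicInt.toZMod cc ≠ 0 := by rw [hmod', h1]; exact one_ne_zero
      obtain ⟨t, ht⟩ := PadicInt.exists_sq_eq hℓ2 cc
        (by rw [hmod', h1]; exact IsSquare.one) hne
      refine hilbert_of_sq_right _ _ (t : ℚ_[ℓ]) ?_
      have : ((t : ℚ_[ℓ])) ^ 2 = ((cc : ℤ_[ℓ]) : ℚ_[ℓ]) := by exact_mod_cast congrArg _ ht
      rw [this, hcc]
      push_cast
      ring
    · -- generic good reduction case
      have hℓD : ¬ ℓ ∣ D := by
        intro hdd
        rcases (Nat.Prime.dvd_mul hℓp).mp (hD ▸ hdd) with h | h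
        · exact hnd h
        · exact hℓN h
      have ha : ¬ (ℓ : ℤ) ∣ (-(D : ℤ)) := by
        rw [dvd_neg, Int.natCast_dvd_natCast]
        exact hℓD
      have hb : ¬ (ℓ : ℤ) ∣ ((p : ℕ) : ℤ) := by
        rw [Int.natCast_dvd_natCast]
        intro hdd
        exact hℓeq ((Nat.prime_dvd_prime_iff_eq hℓp hpp).mp hdd)
      have := hilbert_of_units hℓ2 (-(D : ℤ)) ((p : ℕ) : ℤ) ha hb
      rwa [(by push_cast; ring : ((-(D : ℤ) : ℤ) : ℚ) = -(D : ℚ)),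
        (by push_cast; ring : (((p : ℕ) : ℤ) : ℚ) = (p : ℚ))] at this
  constructor
  · intro hnH
    by_contra hnd
    exact hnH (hpos hnd)
  · exact hneg
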